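/- For any finite connected graph G on n vertices, the Kemeny constant satisfies K ≥ (n-1)²/n, with equality for the complete graph K_n. -/

import Mathlib

open Finset Matrix Polynomial

/-- The transition matrix of the simple random walk on a graph:
`P i j = 1/deg(i)` if `i ~ j`, and `0` otherwise. -/
noncomputable def transMatrix {V : Type*} [Fintype V] (G : SimpleGraph V)
    [DecidableRel G.Adj] : Matrix V V ℝ :=
  fun i j => if G.Adj i j then (1 : ℝ) / (G.degree i) else 0

/-- The stationary distribution of the simple random walk: `π i = deg(i) / (2|E|)`. -/
noncomputable def stationary {V : Type*} [Fintype V] [DecidableEq V] (G : SimpleGraph V)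
    [DecidableRel G.Adj] : V → ℝ :=
  fun i => (G.degree i : ℝ) / (2 * G.edgeFinset.card)

/-- `H` is the table of expected hitting times of the simple random walk on `G`:
`H a b = E_a T_b`.  It is characterized by `H b b = 0` and the one-step
(first-step analysis) equations `H a b = 1 + ∑_j P a j * H j b` for `a ≠ b`. -/
def IsHittingTime {V : Type*} [Fintype V] (G : SimpleGraph V) [DecidableRel G.Adj]
    (H : V → V → ℝ) : Prop :=
  (∀ b, H b b = 0) ∧ ∀ a b, a ≠ b → H a b = 1 + ∑ j, transMatrix G a j * H j b

/-- `R` is the table of effective resistances of `G` (unit resistor on each edge):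
`R a b = v a - v b` where `v` is a potential for a unit current flow from `a` to `b`,
i.e. `L v = 1_a - 1_b` for the graph Laplacian `L`. -/
def IsEffectiveResistance {V : Type*} [Fintype V] [DecidableEq V] (G : SimpleGraph V)
    [DecidableRel G.Adj] (R : V → V → ℝ) : Prop :=
  ∀ a b, ∃ v : V → ℝ,
    G.lapMatrix ℝ *ᵥ v =
      (fun x => (if x = a then (1 : ℝ) else 0) - (if x = b then (1 : ℝ) else 0)) ∧
    R a b = v a - v b

section Aux

variable {V : Type*} [Fintype V] [DecidableEq V]

lemma my_eval_charpoly (M : Matrix V V ℝ) (t : ℝ) :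
    M.charpoly.eval t = (t • (1 : Matrix V V ℝ) - M).det := by
  rw [Matrix.charpoly, ← Polynomial.coe_evalRingHom, RingHom.map_det]
  congr 1
  ext i j
  by_cases h : i = j
  · subst h; simp [charmatrix_apply_eq, Matrix.one_apply]
  · simp [charmatrix_apply_ne _ _ _ h, Matrix.one_apply_ne h]

lemma my_exists_eigvec (M : Matrix V V ℝ) (t : ℝ) (h : M.charpoly.IsRoot t) :
    ∃ v : V → ℝ, v ≠ 0 ∧ M *ᵥ v = t • v := by
  have hdet : (t • (1 : Matrix V V ℝ) - M).det = 0 := by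
    rw [← my_eval_charpoly]; exact h
  obtain ⟨v, hv0, hv⟩ := (Matrix.exists_mulVec_eq_zero_iff).2 hdet
  refine ⟨v, hv0, ?_⟩
  rw [Matrix.sub_mulVec, sub_eq_zero] at hv
  rw [← hv, Matrix.smul_mulVec, Matrix.one_mulVec]

lemma my_charpoly_conj (N N' M : Matrix V V ℝ) (h : N * N' = 1) (_h' : N' * N = 1) :
    (N * M * N').charpoly = M.charpoly := by
  have hmap : ∀ A B : Matrix V V ℝ, (A * B).map (C : ℝ →+* ℝ[X]) =
      A.map C * B.map C := fun A B => Matrix.map_mul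
  have key : charmatrix (N * M * N') = N.map C * charmatrix M * N'.map C := by
    unfold charmatrix
    rw [Matrix.mul_sub, Matrix.sub_mul]
    congr 1
    · have : (Matrix.scalar V (X : ℝ[X])) = (X : ℝ[X]) • (1 : Matrix V V ℝ[X]) := by
        ext i j; by_cases hij : i = j <;> simp [Matrix.scalar_apply, Matrix.one_apply, hij,
          Matrix.diagonal_apply]
      rw [this, Matrix.mul_smul, Matrix.smul_mul, Matrix.mul_one, ← hmap, h,
        Matrix.map_one C (map_zero C) (map_one C)]
    · simp only [RingHom.mapMatrix_apply]
      rw [← hmap, ← hmap]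
  rw [Matrix.charpoly, key, Matrix.det_mul, Matrix.det_mul, Matrix.charpoly,
    mul_comm (N.map C).det, mul_assoc, ← Matrix.det_mul, ← hmap, h, Matrix.map_one C (map_zero C)
      (map_one C), Matrix.det_one, mul_one]

lemma my_charpoly_diagonal (f : V → ℝ) :
    (Matrix.diagonal f).charpoly = ∏ i : V, (X - C (f i)) := by
  have : charmatrix (Matrix.diagonal f) = Matrix.diagonal (fun i => X - C (f i)) := by
    ext i j
    by_cases h : i = j
    · subst h; simp
    · simp [charmatrix_apply_ne _ _ _ h, Matrix.diagonal_apply_ne _ h]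
  rw [Matrix.charpoly, this, Matrix.det_diagonal]

lemma my_count_root_one (G : SimpleGraph V) [DecidableRel G.Adj] (hconn : G.Connected)
    (hd : ∀ v : V, 0 < G.degree v) :
    (transMatrix G).charpoly.roots.count 1 ≤ 1 := by
  classical
  have : Nonempty V := hconn.nonempty
  obtain ⟨v0⟩ := this
  set d : V → ℝ := fun v => (G.degree v : ℝ) with hddef
  have hdpos : ∀ v, (0:ℝ) < d v := fun v => Nat.cast_pos.mpr (hd v)
  have hs : ∀ v, Real.sqrt (d v) ≠ 0 := fun v => ne_of_gt (Real.sqrt_pos.mpr (hdpos v))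
  have hms : ∀ v, Real.sqrt (d v) * Real.sqrt (d v) = d v :=
    fun v => Real.mul_self_sqrt (hdpos v).le
  set N : Matrix V V ℝ := Matrix.diagonal (fun v => Real.sqrt (d v)) with hN
  set N' : Matrix V V ℝ := Matrix.diagonal (fun v => (Real.sqrt (d v))⁻¹) with hN'
  have hNN' : N * N' = 1 := by
    rw [hN, hN', Matrix.diagonal_mul_diagonal,
      show (fun v => Real.sqrt (d v) * (Real.sqrt (d v))⁻¹) = fun _ => (1:ℝ) from
        funext fun v => mul_inv_cancel₀ (hs v), Matrix.diagonal_one]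
  have hN'N : N' * N = 1 := by
    rw [hN, hN', Matrix.diagonal_mul_diagonal,
      show (fun v => (Real.sqrt (d v))⁻¹ * Real.sqrt (d v)) = fun _ => (1:ℝ) from
        funext fun v => inv_mul_cancel₀ (hs v), Matrix.diagonal_one]
  set S := N * transMatrix G * N' with hSdef
  have hSapp : ∀ i j, S i j =
      if G.Adj i j then (Real.sqrt (d i))⁻¹ * (Real.sqrt (d j))⁻¹ else 0 := by
    intro i j
    rw [hSdef, hN, hN', Matrix.mul_diagonal, Matrix.diagonal_mul]
    show Real.sqrt (d i) * (transMatrix G i j) * (Real.sqrt (d j))⁻¹ = _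
    rw [transMatrix]
    by_cases h : G.Adj i j
    · simp only [h, if_true]
      have h2 : (G.degree i : ℝ) = Real.sqrt (d i) * Real.sqrt (d i) := (hms i).symm
      rw [h2, one_div, mul_inv, ← mul_assoc, mul_inv_cancel₀ (hs i), one_mul]
    · simp [h]
  have hherm : S.IsHermitian := by
    rw [Matrix.IsHermitian]
    ext i j
    rw [Matrix.conjTranspose_apply, hSapp, hSapp, star_trivial]
    by_cases h : G.Adj i j
    · rw [if_pos h, if_pos (G.adj_symm h), mul_comm]
    · rw [if_neg h, if_neg (fun h' => h (G.adj_symm h'))]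
  have hcp : S.charpoly = (transMatrix G).charpoly := my_charpoly_conj _ _ _ hNN' hN'N
  set μ := hherm.eigenvalues with hμ
  have hU1 : (hherm.eigenvectorUnitary : Matrix V V ℝ) *
      star (hherm.eigenvectorUnitary : Matrix V V ℝ) = 1 :=
    (Matrix.mem_unitaryGroup_iff).mp (hherm.eigenvectorUnitary).2
  have hU2 : star (hherm.eigenvectorUnitary : Matrix V V ℝ) *
      (hherm.eigenvectorUnitary : Matrix V V ℝ) = 1 :=
    (Matrix.mem_unitaryGroup_iff').mp (hherm.eigenvectorUnitary).2
  have hdiag : Matrix.diagonal ((RCLike.ofReal : ℝ → ℝ) ∘ μ) = Matrix.diagonal μ := by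
    congr 1
  have hSc2 : S.charpoly = ∏ i : V, (X - C (μ i)) := by
    conv_lhs => rw [hherm.spectral_theorem, Unitary.conjStarAlgAut_apply]
    rw [my_charpoly_conj _ _ _ hU1 hU2, hdiag, my_charpoly_diagonal]
  have hroots : (transMatrix G).charpoly.roots = (univ : Finset V).val.map μ := by
    rw [← hcp, hSc2, show ∏ i : V, (X - C (μ i)) =
      (((univ : Finset V).val.map μ).map (fun a => X - C a)).prod from by
        rw [Multiset.map_map]; rfl,
      roots_multiset_prod_X_sub_C]
  have main : ∀ c : V, (1:ℝ) = μ c →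
      ∃ t : ℝ, ∀ k, (hherm.eigenvectorBasis c) k = Real.sqrt (d k) * t := by
    intro c hc
    set u : V → ℝ := ⇑(hherm.eigenvectorBasis c) with hu0
    have hu : S *ᵥ u = u := by
      rw [hu0, hherm.mulVec_eigenvectorBasis, ← hμ, ← hc, one_smul]
    set x : V → ℝ := fun m => (Real.sqrt (d m))⁻¹ * u m with hx
    have hstep : ∀ k, ∑ m ∈ G.neighborFinset k, x m = Real.sqrt (d k) * u k := by
      intro k
      have h1 : ∑ m, S k m * u m = u k := by
        conv_rhs => rw [← hu]
        simp [Matrix.mulVec, dotProduct]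
      have h2 : ∑ m, S k m * u m
          = (Real.sqrt (d k))⁻¹ * ∑ m ∈ G.neighborFinset k, x m := by
        rw [SimpleGraph.neighborFinset_eq_filter, Finset.sum_filter, Finset.mul_sum]
        refine Finset.sum_congr rfl fun m _ => ?_
        rw [hSapp]
        by_cases h : G.Adj k m
        · rw [if_pos h, if_pos h, hx, mul_assoc]
        · rw [if_neg h, if_neg h, zero_mul, mul_zero]
      rw [h2] at h1
      rw [← h1, ← mul_assoc, mul_inv_cancel₀ (hs k), one_mul]
    have hker : Matrix.toLin' (G.lapMatrix ℝ) x = 0 := by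
      rw [Matrix.toLin'_apply]
      funext k
      rw [SimpleGraph.lapMatrix_mulVec_apply, hstep k, Pi.zero_apply, sub_eq_zero]
      show (d k) * x k = Real.sqrt (d k) * u k
      simp only [hx]
      nth_rewrite 1 [← hms k]
      rw [mul_assoc, ← mul_assoc (Real.sqrt (d k)) (Real.sqrt (d k))⁻¹ (u k),
        mul_inv_cancel₀ (hs k), one_mul]
    have hconst := (G.lapMatrix_mulVec_eq_zero_iff_forall_reachable (x := x)).mp
      (by rwa [Matrix.toLin'_apply] at hker)
    refine ⟨x v0, fun k => ?_⟩
    have hxk : x k = x v0 := hconst k v0 (hconn k v0)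
    have huk : u k = Real.sqrt (d k) * x k := by
      rw [hx, ← mul_assoc, mul_inv_cancel₀ (hs k), one_mul]
    rw [huk, hxk]
  by_contra hcon
  push_neg at hcon
  rw [hroots, Multiset.count_map] at hcon
  have h3 : 1 < (univ.filter (fun a => (1:ℝ) = μ a)).card := hcon
  obtain ⟨a, ha, b, hb, hab⟩ := Finset.one_lt_card.mp h3
  simp only [Finset.mem_filter] at ha hb
  obtain ⟨t, ht⟩ := main a ha.2
  obtain ⟨t', ht'⟩ := main b hb.2
  have horm := hherm.eigenvectorBasis.orthonormal
  have hinner := (orthonormal_iff_ite.mp horm) a b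
  rw [if_neg hab] at hinner
  have hnorma := (orthonormal_iff_ite.mp horm) a a
  rw [if_pos rfl] at hnorma
  have hnormb := (orthonormal_iff_ite.mp horm) b b
  rw [if_pos rfl] at hnormb
  have hsum : ∀ (f g : V → ℝ) (s s' : ℝ), (∀ k, f k = Real.sqrt (d k) * s) →
      (∀ k, g k = Real.sqrt (d k) * s') →
      ∑ k, f k * g k = (∑ k, d k) * (s * s') := by
    intro f g s s' hf hg
    rw [Finset.sum_mul]
    refine Finset.sum_congr rfl fun k _ => ?_
    rw [hf k, hg k, mul_mul_mul_comm, hms k]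
  have hIP : ∀ c c' : V, (inner ℝ (hherm.eigenvectorBasis c) (hherm.eigenvectorBasis c') : ℝ)
      = ∑ k, (hherm.eigenvectorBasis c) k * (hherm.eigenvectorBasis c') k := by
    intro c c'
    rw [PiLp.inner_apply]
    refine Finset.sum_congr rfl fun k _ => ?_
    simp [RCLike.inner_apply, mul_comm]
  rw [hIP, hsum _ _ t t' ht ht'] at hinner
  rw [hIP, hsum _ _ t t ht ht] at hnorma
  rw [hIP, hsum _ _ t' t' ht' ht'] at hnormb
  have hDne : (∑ k, d k) ≠ 0 ∧ t ≠ 0 := by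
    constructor
    · intro h; rw [h, zero_mul] at hnorma; exact one_ne_zero hnorma.symm
    · intro h; rw [h, mul_zero, mul_zero] at hnorma; exact one_ne_zero hnorma.symm
  have ht'ne : t' ≠ 0 := by
    intro h; rw [h, mul_zero, mul_zero] at hnormb; exact one_ne_zero hnormb.symm
  exact (mul_ne_zero hDne.1 (mul_ne_zero hDne.2 ht'ne)) hinner

end Aux

/-- For any finite connected graph on `n` vertices, the Kemeny constant
`K = ∑_{j=2}^n 1/(1-λ_j)` (where `1 = λ_1 ≥ λ_2 ≥ ... ≥ λ_n` are the eigenvalues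
of the random-walk transition matrix, listed with multiplicity) satisfies
`K ≥ (n-1)²/n`, with equality for the complete graph `K_n`. -/
theorem kemeny_lower_bound {V : Type*} [Fintype V] [DecidableEq V]
    (G : SimpleGraph V) [DecidableRel G.Adj] (hconn : G.Connected)
    (n : ℕ) (hn : Fintype.card V = n) (hn1 : 0 < n)
    (l : Fin n → ℝ) (hmono : Antitone l) (h1 : l ⟨0, hn1⟩ = 1)
    (hchar : (transMatrix G).charpoly = ∏ j : Fin n, (X - C (l j))) :
    ((n : ℝ) - 1) ^ 2 / n ≤ ∑ j ∈ univ.filter (fun j => j ≠ ⟨0, hn1⟩), 1 / (1 - l j) ∧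
      (G = ⊤ →
        ∑ j ∈ univ.filter (fun j => j ≠ ⟨0, hn1⟩), 1 / (1 - l j) = ((n : ℝ) - 1) ^ 2 / n) := by
  classical
  rcases Nat.lt_or_ge 1 n with hn2 | hn2
  swap
  · -- n = 1
    have hn1' : n = 1 := le_antisymm hn2 hn1
    subst hn1'
    have hT : (univ.filter (fun j : Fin 1 => j ≠ ⟨0, hn1⟩)) = ∅ := by
      apply Finset.eq_empty_of_forall_notMem
      intro j hj
      exact (Finset.mem_filter.mp hj).2 (Subsingleton.elim _ _)
    rw [hT]
    norm_num
  -- main case : 2 ≤ n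
  have : Nonempty V := Fintype.card_pos_iff.mp (by omega)
  have hd : ∀ v : V, 0 < G.degree v := by
    intro v
    rw [G.degree_pos_iff_exists_adj]
    have : Nontrivial V := Fintype.one_lt_card_iff_nontrivial.mp (by omega)
    obtain ⟨w, hw⟩ := exists_ne v
    obtain ⟨p⟩ := hconn v w
    cases p with
    | nil => exact absurd rfl hw
    | cons h _ => exact ⟨_, h⟩
  -- trace is zero
  have htr0 : Matrix.trace (transMatrix G) = 0 := by
    rw [Matrix.trace]
    apply Finset.sum_eq_zero
    intro i _
    show transMatrix G i i = 0
    simp [transMatrix]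
  have hsl : ∑ j : Fin n, l j = 0 := by
    have ht1 := Matrix.trace_eq_neg_charpoly_coeff (transMatrix G)
    rw [hchar, hn, htr0] at ht1
    have ht2 : (∏ j : Fin n, (X - C (l j))).coeff (n - 1) = -∑ j, l j := by
      have := Polynomial.prod_X_sub_C_coeff_card_pred (univ : Finset (Fin n)) l
        (by simp [hn1])
      simpa using this
    rw [ht2] at ht1
    linarith [ht1]
  have hle1 : ∀ j : Fin n, l j ≤ 1 := fun j =>
    h1 ▸ hmono (show (⟨0, hn1⟩ : Fin n) ≤ j by simp [Fin.le_def])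
  -- strictness
  have hlt : ∀ j : Fin n, j ≠ ⟨0, hn1⟩ → l j < 1 := by
    intro s hs0
    rcases lt_or_eq_of_le (hle1 s) with h | h
    · exact h
    · exfalso
      have hcount := my_count_root_one G hconn hd
      rw [hchar] at hcount
      have hroots : (∏ j : Fin n, (X - C (l j))).roots = (univ : Finset (Fin n)).val.map l := by
        rw [show ∏ j : Fin n, (X - C (l j)) =
          (((univ : Finset (Fin n)).val.map l).map (fun a => X - C a)).prod from by
            rw [Multiset.map_map]; rfl,
          roots_multiset_prod_X_sub_C]
      rw [hroots, Multiset.count_map] at hcount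
      have hcount' : (univ.filter (fun a : Fin n => (1:ℝ) = l a)).card ≤ 1 := hcount
      have hsub : ({⟨0, hn1⟩, s} : Finset (Fin n)) ⊆
          univ.filter (fun a => (1:ℝ) = l a) := by
        intro j hj
        rw [Finset.mem_insert, Finset.mem_singleton] at hj
        rcases hj with rfl | rfl
        · exact Finset.mem_filter.mpr ⟨Finset.mem_univ _, h1.symm⟩
        · exact Finset.mem_filter.mpr ⟨Finset.mem_univ _, h.symm⟩
      have h2c : 2 ≤ (univ.filter (fun a : Fin n => (1:ℝ) = l a)).card := by
        refine le_trans ?_ (Finset.card_le_card hsub)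
        rw [Finset.card_insert_of_notMem (by simpa using (Ne.symm hs0)),
          Finset.card_singleton]
      omega
  have hTE : (univ.filter (fun j : Fin n => j ≠ ⟨0, hn1⟩)) = univ.erase ⟨0, hn1⟩ :=
    Finset.filter_ne' _ _
  have hTcard : (univ.filter (fun j : Fin n => j ≠ ⟨0, hn1⟩)).card = n - 1 := by
    rw [hTE, Finset.card_erase_of_mem (Finset.mem_univ _)]
    simp
  have hsumT : ∑ j ∈ univ.filter (fun j : Fin n => j ≠ ⟨0, hn1⟩), (1 - l j) = n := by
    rw [Finset.sum_sub_distrib, Finset.sum_const, hTcard]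
    have hrest : ∑ j ∈ univ.filter (fun j : Fin n => j ≠ ⟨0, hn1⟩), l j
        = (∑ j : Fin n, l j) - l ⟨0, hn1⟩ := by
      rw [hTE, Finset.sum_erase_eq_sub (Finset.mem_univ _)]
    rw [hrest, hsl, h1, nsmul_eq_mul, mul_one, Nat.cast_sub (by omega : 1 ≤ n)]
    push_cast
    ring
  have hpos : ∀ j ∈ univ.filter (fun j : Fin n => j ≠ ⟨0, hn1⟩), (0:ℝ) < 1 - l j := by
    intro j hj
    have := hlt j (Finset.mem_filter.mp hj).2
    linarith
  have hnR : (0:ℝ) < n := by exact_mod_cast hn1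
  have hCS : ((n:ℝ) - 1)^2 ≤
      (n : ℝ) * ∑ j ∈ univ.filter (fun j : Fin n => j ≠ ⟨0, hn1⟩), 1/(1 - l j) := by
    have h' := Finset.sum_sq_le_sum_mul_sum_of_sq_eq_mul
      (univ.filter (fun j : Fin n => j ≠ ⟨0, hn1⟩))
      (r := fun _ => (1:ℝ)) (f := fun j => 1 - l j) (g := fun j => 1/(1 - l j))
      (fun j hj => (hpos j hj).le)
      (fun j hj => one_div_nonneg.mpr (hpos j hj).le)
      (fun j hj => by
        rw [one_pow, mul_one_div, div_self (ne_of_gt (hpos j hj))])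
    rw [Finset.sum_const, hTcard, hsumT, nsmul_eq_mul, mul_one,
      Nat.cast_sub (by omega : 1 ≤ n), Nat.cast_one] at h'
    exact h'
  constructor
  · rw [div_le_iff₀ hnR]
    calc ((n:ℝ) - 1)^2 ≤ (n : ℝ) * ∑ j ∈ univ.filter (fun j : Fin n => j ≠ ⟨0, hn1⟩),
        1/(1 - l j) := hCS
      _ = (∑ j ∈ univ.filter (fun j : Fin n => j ≠ ⟨0, hn1⟩), 1/(1 - l j)) * n := mul_comm _ _
  -- equality case
  intro hG
  have hc0 : ((n:ℝ) - 1) ≠ 0 := by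
    have : (2:ℝ) ≤ n := by exact_mod_cast hn2
    linarith
  set c : ℝ := ((n:ℝ) - 1)⁻¹ with hcdef
  have hadj : ∀ a b : V, G.Adj a b ↔ a ≠ b := by
    intro a b; rw [hG]; exact SimpleGraph.top_adj a b
  have hdeg : ∀ v : V, (G.degree v : ℝ) = (n:ℝ) - 1 := by
    intro v
    have hnb : G.neighborFinset v = univ.erase v := by
      ext w
      simp [SimpleGraph.mem_neighborFinset, hadj v w, ne_comm]
    rw [SimpleGraph.degree, hnb, Finset.card_erase_of_mem (Finset.mem_univ _),
      Finset.card_univ, hn, Nat.cast_sub (by omega : 1 ≤ n), Nat.cast_one]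
  have hall : ∀ j ∈ univ.filter (fun j : Fin n => j ≠ ⟨0, hn1⟩), l j = -c := by
    intro j hj
    have hroot : (transMatrix G).charpoly.IsRoot (l j) := by
      rw [hchar, Polynomial.IsRoot, Polynomial.eval_prod]
      exact Finset.prod_eq_zero (Finset.mem_univ j) (by simp)
    obtain ⟨v, hv0, hv⟩ := my_exists_eigvec _ _ hroot
    have hval : ∀ k, (l j + c) * v k = c * ∑ m, v m := by
      intro k
      have h0 : (transMatrix G *ᵥ v) k = l j * v k := by
        rw [hv, Pi.smul_apply, smul_eq_mul]
      have h1 : (transMatrix G *ᵥ v) k = c * (∑ m, v m) - c * v k := by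
        show ∑ m, transMatrix G k m * v m = _
        have e1 : ∑ m, transMatrix G k m * v m
            = ∑ m, ((fun m => c * v m) m - if k = m then c * v m else 0) := by
          refine Finset.sum_congr rfl fun m _ => ?_
          by_cases h : k = m
          · subst h
            simp [transMatrix]
          · rw [transMatrix]
            simp only [if_pos ((hadj k m).mpr h), if_neg h, sub_zero, hdeg k]
            rw [hcdef, one_div]
        rw [e1, Finset.sum_sub_distrib, Finset.sum_ite_eq, if_pos (Finset.mem_univ k),
          Finset.mul_sum]
      have h2 : l j * v k = c * (∑ m, v m) - c * v k := by rw [← h0, h1]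
      linear_combination h2
    by_contra hne
    have hljc : l j + c ≠ 0 := fun h => hne (eq_neg_of_add_eq_zero_left h)
    have hsum0 : ∑ m, v m ≠ 0 := by
      intro h0
      apply hv0
      funext k
      rw [Pi.zero_apply]
      have hk := hval k
      rw [h0, mul_zero] at hk
      exact (mul_eq_zero.mp hk).resolve_left hljc
    have hvk : ∀ k, v k = c * (∑ m, v m) / (l j + c) := by
      intro k
      rw [eq_div_iff hljc, mul_comm]
      exact hval k
    have hS : ∑ m, v m = (n:ℝ) * (c * (∑ m, v m) / (l j + c)) := by
      calc ∑ m, v m = ∑ _m : V, c * (∑ m, v m) / (l j + c) :=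
            Finset.sum_congr rfl (fun k _ => hvk k)
        _ = (Fintype.card V : ℝ) * (c * (∑ m, v m) / (l j + c)) := by
            rw [Finset.sum_const, Finset.card_univ, nsmul_eq_mul]
        _ = (n:ℝ) * (c * (∑ m, v m) / (l j + c)) := by rw [hn]
    have hfin : l j + c = n * c := by
      have h2' := congrArg (· * (l j + c)) hS
      rw [mul_assoc, div_mul_cancel₀ _ hljc] at h2'
      have h3 : (l j + c) * (∑ m, v m) = ((n:ℝ) * c) * (∑ m, v m) := by
        linear_combination h2'
      exact mul_right_cancel₀ hsum0 h3
    have hlj1 : l j = 1 := by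
      have hcc : ((n:ℝ) - 1) * c = 1 := mul_inv_cancel₀ hc0
      have : l j = ((n:ℝ) - 1) * c := by linarith [hfin]
      rw [this, hcc]
    exact absurd hlj1 (ne_of_lt (hlt j (Finset.mem_filter.mp hj).2))
  have hterm : ∀ j ∈ univ.filter (fun j : Fin n => j ≠ ⟨0, hn1⟩),
      (1:ℝ) / (1 - l j) = ((n:ℝ) - 1) / n := by
    intro j hj
    rw [hall j hj, sub_neg_eq_add, hcdef]
    rw [show (1:ℝ) + ((n:ℝ)-1)⁻¹ = ((n:ℝ))/((n:ℝ)-1) from by field_simp; ring]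
    rw [one_div_div]
  rw [Finset.sum_congr rfl hterm, Finset.sum_const, hTcard, nsmul_eq_mul,
    Nat.cast_sub (by omega : 1 ≤ n), Nat.cast_one]
  field_simp
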